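/- Let u ∈ ℋ and α, β ∈ ℝ, and define B₁ := ((α²+β²)/2)‖D₂₊ Δ₁ u‖²_{ℓ²(𝓘)} + 4αβ ⟨D₁,₀ D₂,₀ u ; Δ₁ u⟩_{ℓ²(𝓘)}. Then B₁ ≤ (α²+β²)·( ‖Δ₁ u‖²_{ℓ²(𝓘)} + ‖D₁₊ D₂₊ u‖²_{ℓ²(𝓘)} ). -/

import Mathlib

noncomputable section

/-- Forward difference in the first variable. -/
def D1p (u : ℤ → ℤ → ℝ) : ℤ → ℤ → ℝ := fun j k => u (j + 1) k - u j k
/-- Backward difference in the first variable. -/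
def D1m (u : ℤ → ℤ → ℝ) : ℤ → ℤ → ℝ := fun j k => u j k - u (j - 1) k
/-- Forward difference in the second variable. -/
def D2p (u : ℤ → ℤ → ℝ) : ℤ → ℤ → ℝ := fun j k => u j (k + 1) - u j k
/-- Backward difference in the second variable. -/
def D2m (u : ℤ → ℤ → ℝ) : ℤ → ℤ → ℝ := fun j k => u j k - u j (k - 1)
/-- Centered difference in the first variable. -/
def D10 (u : ℤ → ℤ → ℝ) : ℤ → ℤ → ℝ := fun j k => (D1p u j k + D1m u j k) / 2
/-- Centered difference in the second variable. -/
def D20 (u : ℤ → ℤ → ℝ) : ℤ → ℤ → ℝ := fun j k => (D2p u j k + D2m u j k) / 2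
/-- Discrete Laplacian in the first variable. -/
def L1 (u : ℤ → ℤ → ℝ) : ℤ → ℤ → ℝ := D1p (D1m u)
/-- Discrete Laplacian in the second variable. -/
def L2 (u : ℤ → ℤ → ℝ) : ℤ → ℤ → ℝ := D2p (D2m u)

/-- Squared ℓ²(ℤ²) norm. -/
def sqZ (u : ℤ → ℤ → ℝ) : ℝ := ∑' p : ℤ × ℤ, (u p.1 p.2) ^ 2
/-- ℓ²(ℤ²) scalar product. -/
def ipZ (u v : ℤ → ℤ → ℝ) : ℝ := ∑' p : ℤ × ℤ, u p.1 p.2 * v p.1 p.2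

/-- Squared ℓ²(𝓘) norm over the interior indices 𝓘 = ℕ × ℤ of the half-space grid. -/
def sqH (u : ℤ → ℤ → ℝ) : ℝ := ∑' p : ℕ × ℤ, (u (p.1 : ℤ) p.2) ^ 2
/-- ℓ²(𝓘) scalar product over the interior indices 𝓘 = ℕ × ℤ. -/
def ipH (u v : ℤ → ℤ → ℝ) : ℝ := ∑' p : ℕ × ℤ, u (p.1 : ℤ) p.2 * v (p.1 : ℤ) p.2
/-- Membership in ℋ : square-summable on the half-space grid and satisfying the
extrapolation (Neumann) boundary condition `u (-1) k = u 0 k`. -/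
def memH (u : ℤ → ℤ → ℝ) : Prop :=
  (∀ k : ℤ, u (-1) k = u 0 k) ∧ Summable (fun p : ℕ × ℤ => (u (p.1 : ℤ) p.2) ^ 2)

/-- Squared ℓ²(𝔦) norm over the interior indices 𝔦 = ℕ × ℕ of the quarter-space grid. -/
def sqQ (u : ℤ → ℤ → ℝ) : ℝ := ∑' p : ℕ × ℕ, (u (p.1 : ℤ) (p.2 : ℤ)) ^ 2
/-- ℓ²(𝔦) scalar product over the interior indices 𝔦 = ℕ × ℕ. -/
def ipQ (u v : ℤ → ℤ → ℝ) : ℝ :=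
  ∑' p : ℕ × ℕ, u (p.1 : ℤ) (p.2 : ℤ) * v (p.1 : ℤ) (p.2 : ℤ)
/-- Membership in 𝔥 : square-summable on the quarter-space grid, satisfying the
extrapolation boundary conditions on both sides and the corner condition. -/
def memQ (u : ℤ → ℤ → ℝ) : Prop :=
  (∀ k : ℤ, -1 ≤ k → u (-1) k = u 0 k) ∧ (∀ j : ℤ, 0 ≤ j → u j (-1) = u j 0) ∧
    Summable (fun p : ℕ × ℕ => (u (p.1 : ℤ) (p.2 : ℤ)) ^ 2)

/-- The skew-selfadjoint part `v` in the decomposition of the Lax-Wendroff scheme. -/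
def vop (α β : ℝ) (u : ℤ → ℤ → ℝ) : ℤ → ℤ → ℝ :=
  fun j k => -α * D10 u j k - β * D20 u j k
/-- The selfadjoint part `w` in the decomposition of the Lax-Wendroff scheme. -/
def wop (α β : ℝ) (u : ℤ → ℤ → ℝ) : ℤ → ℤ → ℝ :=
  fun j k => -(α ^ 2 / 2) * L1 u j k - (β ^ 2 / 2) * L2 u j k
    - α * β * D10 (D20 u) j k + ((α ^ 2 + β ^ 2) / 8) * L1 (L2 u) j k


/-! ### Auxiliary machinery for Lemma 7 -/

private lemma hl7_kshift_tsum (f : ℕ × ℤ → ℝ) (m : ℤ) :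
    ∑' p : ℕ × ℤ, f (p.1, p.2 + m) = ∑' p, f p := by
  simpa [Prod.map] using ((Equiv.refl ℕ).prodCongr (Equiv.addRight m)).tsum_eq f

private lemma hl7_kshift_summable {f : ℕ × ℤ → ℝ} (hf : Summable f) (m : ℤ) :
    Summable fun p : ℕ × ℤ => f (p.1, p.2 + m) := by
  have := (((Equiv.refl ℕ).prodCongr (Equiv.addRight m)).summable_iff (f := f)).mpr hf
  exact this

private lemma hl7_jshift_tsum (g : ℤ × ℤ → ℝ) (h0 : ∀ k, g (-1, k) = 0) :
    ∑' p : ℕ × ℤ, g ((p.1 : ℤ) - 1, p.2) = ∑' p : ℕ × ℤ, g ((p.1 : ℤ), p.2) := by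
  have hi : Function.Injective (fun p : ℕ × ℤ => ((p.1 + 1 : ℕ), p.2)) := by
    intro p q h
    simp only [Prod.mk.injEq, add_left_injective] at h
    exact Prod.ext (by omega) h.2
  have h := hi.tsum_eq (f := fun p : ℕ × ℤ => g ((p.1 : ℤ) - 1, p.2)) ?_
  · rw [← h]
    apply tsum_congr
    intro p
    have : ((p.1 + 1 : ℕ) : ℤ) - 1 = (p.1 : ℤ) := by push_cast; ring
    simp only [this]
  · intro p hp
    rcases Nat.eq_zero_or_pos p.1 with h1 | h1
    · exfalso
      apply hp
      simp only [Function.mem_support, ne_eq, not_not] at *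
      rw [show ((p.1 : ℤ) - 1) = -1 by omega]
      exact h0 p.2
    · exact ⟨(p.1 - 1, p.2), by ext <;> simp <;> omega⟩

private lemma hl7_jshift_summable {g : ℤ × ℤ → ℝ} (h0 : ∀ k, g (-1, k) = 0)
    (hg : Summable fun p : ℕ × ℤ => g ((p.1 : ℤ), p.2)) :
    Summable fun p : ℕ × ℤ => g ((p.1 : ℤ) - 1, p.2) := by
  have hi : Function.Injective (fun p : ℕ × ℤ => ((p.1 + 1 : ℕ), p.2)) := by
    intro p q h
    simp only [Prod.mk.injEq, add_left_injective] at h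
    exact Prod.ext (by omega) h.2
  refine (hi.summable_iff ?_).mp ?_
  · intro p hp
    rcases Nat.eq_zero_or_pos p.1 with h1 | h1
    · rw [show ((p.1 : ℤ) - 1) = -1 by omega]
      exact h0 p.2
    · exact absurd ⟨(p.1 - 1, p.2), by ext <;> simp <;> omega⟩ hp
  · have : ((fun p : ℕ × ℤ => g ((p.1 : ℤ) - 1, p.2)) ∘ fun p : ℕ × ℤ => ((p.1 + 1 : ℕ), p.2))
        = fun p : ℕ × ℤ => g ((p.1 : ℤ), p.2) := by
      funext p
      have : ((p.1 + 1 : ℕ) : ℤ) - 1 = (p.1 : ℤ) := by push_cast; ring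
      simp [Function.comp, this]
    rw [this]
    exact hg

private lemma hl7_summable_mul {f g : ℕ × ℤ → ℝ} (hf : Summable fun p => f p ^ 2)
    (hg : Summable fun p => g p ^ 2) : Summable fun p => f p * g p := by
  apply Summable.of_abs
  apply Summable.of_nonneg_of_le (fun p => abs_nonneg _)
      (fun p => ?_) ((hf.add hg).div_const 2)
  rw [abs_mul]
  nlinarith [sq_nonneg (|f p| - |g p|), sq_abs (f p), sq_abs (g p),
    abs_nonneg (f p), abs_nonneg (g p)]

set_option maxHeartbeats 2000000 in
private lemma hl7_key (w : ℤ → ℤ → ℝ) (h0 : ∀ k, w (-1) k = 0)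
    (hs : Summable fun p : ℕ × ℤ => (w (p.1 : ℤ) p.2) ^ 2) (α β : ℝ) :
    ((α ^ 2 + β ^ 2) / 2) *
        ∑' p : ℕ × ℤ, ((w (p.1 : ℤ) (p.2 + 1) - w ((p.1 : ℤ) - 1) (p.2 + 1))
          - (w (p.1 : ℤ) p.2 - w ((p.1 : ℤ) - 1) p.2)) ^ 2
      + 4 * α * β *
        ∑' p : ℕ × ℤ, ((w (p.1 : ℤ) (p.2 + 1) + w ((p.1 : ℤ) - 1) (p.2 + 1)
            - w (p.1 : ℤ) (p.2 - 1) - w ((p.1 : ℤ) - 1) (p.2 - 1)) / 4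
          * (w (p.1 : ℤ) p.2 - w ((p.1 : ℤ) - 1) p.2)) ≤
      (α ^ 2 + β ^ 2) *
        ((∑' p : ℕ × ℤ, (w (p.1 : ℤ) p.2 - w ((p.1 : ℤ) - 1) p.2) ^ 2)
          + ∑' p : ℕ × ℤ, (w (p.1 : ℤ) (p.2 + 1) - w (p.1 : ℤ) p.2) ^ 2) := by
  -- summability of squares of shifted versions of w
  have ha : Summable fun p : ℕ × ℤ => (w (p.1 : ℤ) p.2) ^ 2 := hs
  have ha1 : Summable fun p : ℕ × ℤ => (w (p.1 : ℤ) (p.2 + 1)) ^ 2 := hl7_kshift_summable hs 1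
  have ham : Summable fun p : ℕ × ℤ => (w (p.1 : ℤ) (p.2 - 1)) ^ 2 := by
    have := hl7_kshift_summable hs (-1)
    simpa [sub_eq_add_neg] using this
  have hb : Summable fun p : ℕ × ℤ => (w ((p.1 : ℤ) - 1) p.2) ^ 2 :=
    hl7_jshift_summable (g := fun q => (w q.1 q.2) ^ 2) (by simp [h0]) hs
  have hb1 : Summable fun p : ℕ × ℤ => (w ((p.1 : ℤ) - 1) (p.2 + 1)) ^ 2 :=
    hl7_jshift_summable (g := fun q => (w q.1 (q.2 + 1)) ^ 2) (by simp [h0]) ha1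
  have hbm : Summable fun p : ℕ × ℤ => (w ((p.1 : ℤ) - 1) (p.2 - 1)) ^ 2 :=
    hl7_jshift_summable (g := fun q => (w q.1 (q.2 - 1)) ^ 2) (by simp [h0]) ham
  -- pow-two to self-product conversion
  have sqm : ∀ x : ℝ, x ^ 2 = x * x := fun x => sq x
  -- the five elementary sums (as tsum terms); monomial HasSum facts
  -- H_AA
  have H_AA : HasSum (fun p : ℕ × ℤ => w (p.1 : ℤ) p.2 * w (p.1 : ℤ) p.2)
      (∑' p : ℕ × ℤ, w (p.1 : ℤ) p.2 * w (p.1 : ℤ) p.2) := (hl7_summable_mul ha ha).hasSum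
  have H_AB : HasSum (fun p : ℕ × ℤ => w (p.1 : ℤ) p.2 * w ((p.1 : ℤ) - 1) p.2)
      (∑' p : ℕ × ℤ, w (p.1 : ℤ) p.2 * w ((p.1 : ℤ) - 1) p.2) := (hl7_summable_mul ha hb).hasSum
  have H_AY : HasSum (fun p : ℕ × ℤ => w (p.1 : ℤ) p.2 * w (p.1 : ℤ) (p.2 + 1))
      (∑' p : ℕ × ℤ, w (p.1 : ℤ) p.2 * w (p.1 : ℤ) (p.2 + 1)) := (hl7_summable_mul ha ha1).hasSum
  have H_AXp : HasSum (fun p : ℕ × ℤ => w (p.1 : ℤ) p.2 * w ((p.1 : ℤ) - 1) (p.2 + 1))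
      (∑' p : ℕ × ℤ, w (p.1 : ℤ) p.2 * w ((p.1 : ℤ) - 1) (p.2 + 1)) :=
    (hl7_summable_mul ha hb1).hasSum
  have H_AXm : HasSum (fun p : ℕ × ℤ => w (p.1 : ℤ) p.2 * w ((p.1 : ℤ) - 1) (p.2 - 1))
      (∑' p : ℕ × ℤ, w (p.1 : ℤ) p.2 * w ((p.1 : ℤ) - 1) (p.2 - 1)) :=
    (hl7_summable_mul ha hbm).hasSum
  -- shifted monomials and their tsum identifications
  have e_BB : (∑' p : ℕ × ℤ, w ((p.1 : ℤ) - 1) p.2 * w ((p.1 : ℤ) - 1) p.2)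
      = ∑' p : ℕ × ℤ, w (p.1 : ℤ) p.2 * w (p.1 : ℤ) p.2 := by
    simpa using hl7_jshift_tsum (fun q => w q.1 q.2 * w q.1 q.2) (by simp [h0])
  have H_BB : HasSum (fun p : ℕ × ℤ => w ((p.1 : ℤ) - 1) p.2 * w ((p.1 : ℤ) - 1) p.2)
      (∑' p : ℕ × ℤ, w (p.1 : ℤ) p.2 * w (p.1 : ℤ) p.2) := by
    rw [← e_BB]; exact (hl7_summable_mul hb hb).hasSum
  have e_A1A1 : (∑' p : ℕ × ℤ, w (p.1 : ℤ) (p.2 + 1) * w (p.1 : ℤ) (p.2 + 1))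
      = ∑' p : ℕ × ℤ, w (p.1 : ℤ) p.2 * w (p.1 : ℤ) p.2 := by
    simpa using hl7_kshift_tsum (fun q : ℕ × ℤ => w (q.1 : ℤ) q.2 * w (q.1 : ℤ) q.2) 1
  have H_A1A1 : HasSum (fun p : ℕ × ℤ => w (p.1 : ℤ) (p.2 + 1) * w (p.1 : ℤ) (p.2 + 1))
      (∑' p : ℕ × ℤ, w (p.1 : ℤ) p.2 * w (p.1 : ℤ) p.2) := by
    rw [← e_A1A1]; exact (hl7_summable_mul ha1 ha1).hasSum
  have e_B1B1 : (∑' p : ℕ × ℤ, w ((p.1 : ℤ) - 1) (p.2 + 1) * w ((p.1 : ℤ) - 1) (p.2 + 1))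
      = ∑' p : ℕ × ℤ, w (p.1 : ℤ) p.2 * w (p.1 : ℤ) p.2 := by
    have := hl7_jshift_tsum (fun q => w q.1 (q.2 + 1) * w q.1 (q.2 + 1)) (by simp [h0])
    simpa [e_A1A1] using this
  have H_B1B1 : HasSum (fun p : ℕ × ℤ => w ((p.1 : ℤ) - 1) (p.2 + 1) * w ((p.1 : ℤ) - 1) (p.2 + 1))
      (∑' p : ℕ × ℤ, w (p.1 : ℤ) p.2 * w (p.1 : ℤ) p.2) := by
    rw [← e_B1B1]; exact (hl7_summable_mul hb1 hb1).hasSum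
  have e_A2A2 : (∑' p : ℕ × ℤ, w (p.1 : ℤ) (p.2 - 1) * w (p.1 : ℤ) (p.2 - 1))
      = ∑' p : ℕ × ℤ, w (p.1 : ℤ) p.2 * w (p.1 : ℤ) p.2 := by
    have := hl7_kshift_tsum (fun q : ℕ × ℤ => w (q.1 : ℤ) (q.2 - 1) * w (q.1 : ℤ) (q.2 - 1)) 1
    simp only [add_sub_cancel_right] at this
    exact this.symm
  have e_B2B2 : (∑' p : ℕ × ℤ, w ((p.1 : ℤ) - 1) (p.2 - 1) * w ((p.1 : ℤ) - 1) (p.2 - 1))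
      = ∑' p : ℕ × ℤ, w (p.1 : ℤ) p.2 * w (p.1 : ℤ) p.2 := by
    have := hl7_jshift_tsum (fun q => w q.1 (q.2 - 1) * w q.1 (q.2 - 1)) (by simp [h0])
    simpa [e_A2A2] using this
  have H_B2B2 : HasSum (fun p : ℕ × ℤ => w ((p.1 : ℤ) - 1) (p.2 - 1) * w ((p.1 : ℤ) - 1) (p.2 - 1))
      (∑' p : ℕ × ℤ, w (p.1 : ℤ) p.2 * w (p.1 : ℤ) p.2) := by
    rw [← e_B2B2]; exact (hl7_summable_mul hbm hbm).hasSum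
  have e_A1B1 : (∑' p : ℕ × ℤ, w (p.1 : ℤ) (p.2 + 1) * w ((p.1 : ℤ) - 1) (p.2 + 1))
      = ∑' p : ℕ × ℤ, w (p.1 : ℤ) p.2 * w ((p.1 : ℤ) - 1) p.2 := by
    simpa using hl7_kshift_tsum (fun q : ℕ × ℤ => w (q.1 : ℤ) q.2 * w ((q.1 : ℤ) - 1) q.2) 1
  have H_A1B1 : HasSum (fun p : ℕ × ℤ => w (p.1 : ℤ) (p.2 + 1) * w ((p.1 : ℤ) - 1) (p.2 + 1))
      (∑' p : ℕ × ℤ, w (p.1 : ℤ) p.2 * w ((p.1 : ℤ) - 1) p.2) := by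
    rw [← e_A1B1]; exact (hl7_summable_mul ha1 hb1).hasSum
  have e_A1B : (∑' p : ℕ × ℤ, w (p.1 : ℤ) (p.2 + 1) * w ((p.1 : ℤ) - 1) p.2)
      = ∑' p : ℕ × ℤ, w (p.1 : ℤ) p.2 * w ((p.1 : ℤ) - 1) (p.2 - 1) := by
    have := hl7_kshift_tsum (fun q : ℕ × ℤ => w (q.1 : ℤ) q.2 * w ((q.1 : ℤ) - 1) (q.2 - 1)) 1
    simp only [add_sub_cancel_right] at this
    exact this
  have H_A1B : HasSum (fun p : ℕ × ℤ => w (p.1 : ℤ) (p.2 + 1) * w ((p.1 : ℤ) - 1) p.2)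
      (∑' p : ℕ × ℤ, w (p.1 : ℤ) p.2 * w ((p.1 : ℤ) - 1) (p.2 - 1)) := by
    rw [← e_A1B]; exact (hl7_summable_mul ha1 hb).hasSum
  have e_A1A : (∑' p : ℕ × ℤ, w ((p.1 : ℤ)) (p.2 + 1) * w ((p.1 : ℤ)) p.2)
      = ∑' p : ℕ × ℤ, w (p.1 : ℤ) p.2 * w (p.1 : ℤ) (p.2 + 1) :=
    tsum_congr fun p => mul_comm _ _
  have e_B1B : (∑' p : ℕ × ℤ, w ((p.1 : ℤ) - 1) (p.2 + 1) * w ((p.1 : ℤ) - 1) p.2)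
      = ∑' p : ℕ × ℤ, w (p.1 : ℤ) p.2 * w (p.1 : ℤ) (p.2 + 1) := by
    have := hl7_jshift_tsum (fun q => w q.1 (q.2 + 1) * w q.1 q.2) (by simp [h0])
    simpa [e_A1A] using this
  have H_B1B : HasSum (fun p : ℕ × ℤ => w ((p.1 : ℤ) - 1) (p.2 + 1) * w ((p.1 : ℤ) - 1) p.2)
      (∑' p : ℕ × ℤ, w (p.1 : ℤ) p.2 * w (p.1 : ℤ) (p.2 + 1)) := by
    rw [← e_B1B]; exact (hl7_summable_mul hb1 hb)
      |>.hasSum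
  have e_A2A : (∑' p : ℕ × ℤ, w (p.1 : ℤ) (p.2 - 1) * w (p.1 : ℤ) p.2)
      = ∑' p : ℕ × ℤ, w (p.1 : ℤ) p.2 * w (p.1 : ℤ) (p.2 + 1) := by
    have := hl7_kshift_tsum (fun q : ℕ × ℤ => w (q.1 : ℤ) (q.2 - 1) * w (q.1 : ℤ) q.2) 1
    simp only [add_sub_cancel_right] at this
    exact this.symm
  have H_A2A : HasSum (fun p : ℕ × ℤ => w (p.1 : ℤ) (p.2 - 1) * w (p.1 : ℤ) p.2)
      (∑' p : ℕ × ℤ, w (p.1 : ℤ) p.2 * w (p.1 : ℤ) (p.2 + 1)) := by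
    rw [← e_A2A]; exact (hl7_summable_mul ham ha).hasSum
  have e_A2B : (∑' p : ℕ × ℤ, w (p.1 : ℤ) (p.2 - 1) * w ((p.1 : ℤ) - 1) p.2)
      = ∑' p : ℕ × ℤ, w (p.1 : ℤ) p.2 * w ((p.1 : ℤ) - 1) (p.2 + 1) := by
    have := hl7_kshift_tsum (fun q : ℕ × ℤ => w (q.1 : ℤ) (q.2 - 1) * w ((q.1 : ℤ) - 1) q.2) 1
    simp only [add_sub_cancel_right] at this
    exact this.symm
  have H_A2B : HasSum (fun p : ℕ × ℤ => w (p.1 : ℤ) (p.2 - 1) * w ((p.1 : ℤ) - 1) p.2)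
      (∑' p : ℕ × ℤ, w (p.1 : ℤ) p.2 * w ((p.1 : ℤ) - 1) (p.2 + 1)) := by
    rw [← e_A2B]; exact (hl7_summable_mul ham hb).hasSum
  have e_B2B : (∑' p : ℕ × ℤ, w ((p.1 : ℤ) - 1) (p.2 - 1) * w ((p.1 : ℤ) - 1) p.2)
      = ∑' p : ℕ × ℤ, w (p.1 : ℤ) p.2 * w (p.1 : ℤ) (p.2 + 1) := by
    have := hl7_jshift_tsum (fun q => w q.1 (q.2 - 1) * w q.1 q.2) (by simp [h0])
    simpa [e_A2A] using this
  have H_B2B : HasSum (fun p : ℕ × ℤ => w ((p.1 : ℤ) - 1) (p.2 - 1) * w ((p.1 : ℤ) - 1) p.2)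
      (∑' p : ℕ × ℤ, w (p.1 : ℤ) p.2 * w (p.1 : ℤ) (p.2 + 1)) := by
    rw [← e_B2B]; exact (hl7_summable_mul hbm hb).hasSum
  -- expansions of the six quadratic sums
  have eA : (∑' p : ℕ × ℤ, (w (p.1 : ℤ) p.2 - w ((p.1 : ℤ) - 1) p.2) ^ 2)
      = ((∑' p : ℕ × ℤ, w (p.1 : ℤ) p.2 * w (p.1 : ℤ) p.2)
          + ∑' p : ℕ × ℤ, w (p.1 : ℤ) p.2 * w (p.1 : ℤ) p.2)
        - 2 * ∑' p : ℕ × ℤ, w (p.1 : ℤ) p.2 * w ((p.1 : ℤ) - 1) p.2 := by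
    rw [← ((H_AA.add H_BB).sub (H_AB.mul_left 2)).tsum_eq]
    exact tsum_congr fun p => by ring
  have eC : (∑' p : ℕ × ℤ, (w (p.1 : ℤ) (p.2 + 1) - w (p.1 : ℤ) p.2) ^ 2)
      = ((∑' p : ℕ × ℤ, w (p.1 : ℤ) p.2 * w (p.1 : ℤ) p.2)
          + ∑' p : ℕ × ℤ, w (p.1 : ℤ) p.2 * w (p.1 : ℤ) p.2)
        - 2 * ∑' p : ℕ × ℤ, w (p.1 : ℤ) p.2 * w (p.1 : ℤ) (p.2 + 1) := by
    rw [← ((H_A1A1.add H_AA).sub (H_AY.mul_left 2)).tsum_eq]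
    exact tsum_congr fun p => by ring
  have eN : (∑' p : ℕ × ℤ, ((w (p.1 : ℤ) (p.2 + 1) - w ((p.1 : ℤ) - 1) (p.2 + 1))
        - (w (p.1 : ℤ) p.2 - w ((p.1 : ℤ) - 1) p.2)) ^ 2)
      = (((((((((∑' p : ℕ × ℤ, w (p.1 : ℤ) p.2 * w (p.1 : ℤ) p.2)
          + ∑' p : ℕ × ℤ, w (p.1 : ℤ) p.2 * w (p.1 : ℤ) p.2)
          + ∑' p : ℕ × ℤ, w (p.1 : ℤ) p.2 * w (p.1 : ℤ) p.2)
          + ∑' p : ℕ × ℤ, w (p.1 : ℤ) p.2 * w (p.1 : ℤ) p.2)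
        - 2 * ∑' p : ℕ × ℤ, w (p.1 : ℤ) p.2 * w ((p.1 : ℤ) - 1) p.2)
        - 2 * ∑' p : ℕ × ℤ, w (p.1 : ℤ) p.2 * w (p.1 : ℤ) (p.2 + 1))
        + 2 * ∑' p : ℕ × ℤ, w (p.1 : ℤ) p.2 * w ((p.1 : ℤ) - 1) (p.2 - 1))
        + 2 * ∑' p : ℕ × ℤ, w (p.1 : ℤ) p.2 * w ((p.1 : ℤ) - 1) (p.2 + 1))
        - 2 * ∑' p : ℕ × ℤ, w (p.1 : ℤ) p.2 * w (p.1 : ℤ) (p.2 + 1))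
        - 2 * ∑' p : ℕ × ℤ, w (p.1 : ℤ) p.2 * w ((p.1 : ℤ) - 1) p.2 := by
    rw [← ((((((((H_A1A1.add H_B1B1).add H_AA).add H_BB).sub (H_A1B1.mul_left 2)).sub
      (H_AY.mul_left 2)).add (H_A1B.mul_left 2)).add (H_AXp.mul_left 2)).sub
      (H_B1B.mul_left 2)).sub (H_AB.mul_left 2) |>.tsum_eq]
    exact tsum_congr fun p => by ring
  have eS : (∑' p : ℕ × ℤ, ((w (p.1 : ℤ) (p.2 + 1) + w ((p.1 : ℤ) - 1) (p.2 + 1)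
        - w (p.1 : ℤ) (p.2 - 1) - w ((p.1 : ℤ) - 1) (p.2 - 1)) / 4
        * (w (p.1 : ℤ) p.2 - w ((p.1 : ℤ) - 1) p.2)))
      = (1 / 4) * ((((((((∑' p : ℕ × ℤ, w (p.1 : ℤ) p.2 * w (p.1 : ℤ) (p.2 + 1))
          - ∑' p : ℕ × ℤ, w (p.1 : ℤ) p.2 * w ((p.1 : ℤ) - 1) (p.2 - 1))
          + ∑' p : ℕ × ℤ, w (p.1 : ℤ) p.2 * w ((p.1 : ℤ) - 1) (p.2 + 1))
          - ∑' p : ℕ × ℤ, w (p.1 : ℤ) p.2 * w (p.1 : ℤ) (p.2 + 1))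
          - ∑' p : ℕ × ℤ, w (p.1 : ℤ) p.2 * w (p.1 : ℤ) (p.2 + 1))
          + ∑' p : ℕ × ℤ, w (p.1 : ℤ) p.2 * w ((p.1 : ℤ) - 1) (p.2 + 1))
          - ∑' p : ℕ × ℤ, w (p.1 : ℤ) p.2 * w ((p.1 : ℤ) - 1) (p.2 - 1))
          + ∑' p : ℕ × ℤ, w (p.1 : ℤ) p.2 * w (p.1 : ℤ) (p.2 + 1)) := by
    rw [← ((((((((H_AY.sub H_A1B).add H_AXp).sub H_B1B).sub H_A2A).add H_A2B).sub
      H_AXm).add H_B2B).mul_left (1 / 4)).tsum_eq]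
    exact tsum_congr fun p => by ring
  have eTp : (∑' p : ℕ × ℤ, (w (p.1 : ℤ) p.2 - w ((p.1 : ℤ) - 1) (p.2 + 1)) ^ 2)
      = ((∑' p : ℕ × ℤ, w (p.1 : ℤ) p.2 * w (p.1 : ℤ) p.2)
          + ∑' p : ℕ × ℤ, w (p.1 : ℤ) p.2 * w (p.1 : ℤ) p.2)
        - 2 * ∑' p : ℕ × ℤ, w (p.1 : ℤ) p.2 * w ((p.1 : ℤ) - 1) (p.2 + 1) := by
    rw [← ((H_AA.add H_B1B1).sub (H_AXp.mul_left 2)).tsum_eq]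
    exact tsum_congr fun p => by ring
  have eTm : (∑' p : ℕ × ℤ, (w (p.1 : ℤ) p.2 - w ((p.1 : ℤ) - 1) (p.2 - 1)) ^ 2)
      = ((∑' p : ℕ × ℤ, w (p.1 : ℤ) p.2 * w (p.1 : ℤ) p.2)
          + ∑' p : ℕ × ℤ, w (p.1 : ℤ) p.2 * w (p.1 : ℤ) p.2)
        - 2 * ∑' p : ℕ × ℤ, w (p.1 : ℤ) p.2 * w ((p.1 : ℤ) - 1) (p.2 - 1) := by
    rw [← ((H_AA.add H_B2B2).sub (H_AXm.mul_left 2)).tsum_eq]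
    exact tsum_congr fun p => by ring
  -- nonnegativity of the two sums of squares
  have hTp : (0 : ℝ) ≤ ∑' p : ℕ × ℤ, (w (p.1 : ℤ) p.2 - w ((p.1 : ℤ) - 1) (p.2 + 1)) ^ 2 :=
    tsum_nonneg fun p => sq_nonneg _
  have hTm : (0 : ℝ) ≤ ∑' p : ℕ × ℤ, (w (p.1 : ℤ) p.2 - w ((p.1 : ℤ) - 1) (p.2 - 1)) ^ 2 :=
    tsum_nonneg fun p => sq_nonneg _
  rw [eTp] at hTp
  rw [eTm] at hTm
  rw [eN, eS, eA, eC]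
  nlinarith [mul_nonneg (sq_nonneg (α + β)) hTp, mul_nonneg (sq_nonneg (α - β)) hTm]

/-- Lemma 7: bound on the quantity `B₁` in the half-space. -/
theorem halfspace_lemma7 (α β : ℝ) (u : ℤ → ℤ → ℝ) (hu : memH u) :
    ((α ^ 2 + β ^ 2) / 2) * sqH (D2p (L1 u))
        + 4 * α * β * ipH (D10 (D20 u)) (L1 u) ≤
      (α ^ 2 + β ^ 2) * (sqH (L1 u) + sqH (D1p (D2p u))) := by
  obtain ⟨hbc, hsum⟩ := hu
  set w : ℤ → ℤ → ℝ := fun j k => u (j + 1) k - u j k with hw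
  have pw1 : ∀ j k : ℤ, L1 u j k = w j k - w (j - 1) k := by
    intro j k
    simp only [L1, D1p, D1m, hw]
    rw [show j + 1 - 1 = j by ring, show j - 1 + 1 = j by ring]
  have pw2 : ∀ j k : ℤ, D2p (L1 u) j k
      = (w j (k + 1) - w (j - 1) (k + 1)) - (w j k - w (j - 1) k) := by
    intro j k
    simp only [D2p]
    rw [pw1, pw1]
  have pw3 : ∀ j k : ℤ, D1p (D2p u) j k = w j (k + 1) - w j k := by
    intro j k
    simp only [D1p, D2p, hw]
    ring
  have pw4 : ∀ j k : ℤ, D10 (D20 u) j k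
      = (w j (k + 1) + w (j - 1) (k + 1) - w j (k - 1) - w (j - 1) (k - 1)) / 4 := by
    intro j k
    simp only [D10, D20, D1p, D1m, D2p, D2m, hw]
    ring
  have h0 : ∀ k : ℤ, w (-1) k = 0 := by
    intro k
    show u (-1 + 1) k - u (-1) k = 0
    rw [hbc k]
    norm_num
  have hs : Summable fun p : ℕ × ℤ => (w (p.1 : ℤ) p.2) ^ 2 := by
    have hi : Function.Injective (fun p : ℕ × ℤ => ((p.1 + 1 : ℕ), p.2)) := by
      intro p q h
      simp only [Prod.mk.injEq, add_left_injective] at h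
      exact Prod.ext (by omega) h.2
    have h1 : Summable fun p : ℕ × ℤ => (u ((p.1 : ℤ) + 1) p.2) ^ 2 := by
      have h2 := hsum.comp_injective hi
      exact h2.congr fun p => by
        show (u ((p.1 + 1 : ℕ) : ℤ) p.2) ^ 2 = _
        push_cast
        ring
    apply Summable.of_nonneg_of_le (fun p => sq_nonneg _) (fun p => ?_)
      ((h1.mul_left 2).add (hsum.mul_left 2))
    show (w (p.1 : ℤ) p.2) ^ 2 ≤ _
    simp only [hw]
    nlinarith [sq_nonneg (u ((p.1 : ℤ) + 1) p.2 + u (p.1 : ℤ) p.2)]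
  have r1 : sqH (L1 u)
      = ∑' p : ℕ × ℤ, (w (p.1 : ℤ) p.2 - w ((p.1 : ℤ) - 1) p.2) ^ 2 := by
    unfold sqH
    exact tsum_congr fun p => by rw [pw1]
  have r2 : sqH (D2p (L1 u))
      = ∑' p : ℕ × ℤ, ((w (p.1 : ℤ) (p.2 + 1) - w ((p.1 : ℤ) - 1) (p.2 + 1))
          - (w (p.1 : ℤ) p.2 - w ((p.1 : ℤ) - 1) p.2)) ^ 2 := by
    unfold sqH
    exact tsum_congr fun p => by rw [pw2]
  have r3 : sqH (D1p (D2p u))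
      = ∑' p : ℕ × ℤ, (w (p.1 : ℤ) (p.2 + 1) - w (p.1 : ℤ) p.2) ^ 2 := by
    unfold sqH
    exact tsum_congr fun p => by rw [pw3]
  have r4 : ipH (D10 (D20 u)) (L1 u)
      = ∑' p : ℕ × ℤ, ((w (p.1 : ℤ) (p.2 + 1) + w ((p.1 : ℤ) - 1) (p.2 + 1)
          - w (p.1 : ℤ) (p.2 - 1) - w ((p.1 : ℤ) - 1) (p.2 - 1)) / 4
        * (w (p.1 : ℤ) p.2 - w ((p.1 : ℤ) - 1) p.2)) := by
    unfold ipH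
    exact tsum_congr fun p => by rw [pw4, pw1]
  rw [r1, r2, r3, r4]
  exact hl7_key w h0 hs α β
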